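/- arXiv:1910.08274 — 3 statements merged into one kernel-verified Lean document; each statement's English description precedes it below -/
import Mathlib

section
/- Let 0 < r ≤ π/√2 and let D_r := ⋃_{k ∈ ℤ} { z ∈ ℂ : |z − 2kπi| < r }. Then for every z ∈ ℂ \ D_r one has |e^z − 1| ≥ 1 − e^(−r/√2). -/
open Complex Real

lemma aux_exp_neg_ge (s : ℝ) (h0 : 0 ≤ s) (h1 : s ≤ 1) :
    1 - s + s^2/2 - s^3/6 - 5*s^4/96 ≤ Real.exp (-s) := by
  have habs : |(-s)| = s := by rw [abs_neg, _root_.abs_of_nonneg h0]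
  have h := Real.exp_bound (x := -s) (by rwa [habs]) (n := 4) (by norm_num)
  rw [habs] at h
  have h' := (abs_sub_le_iff.mp h).2
  simp only [Finset.sum_range_succ, Finset.sum_range_zero, Nat.factorial] at h'
  norm_num at h'
  nlinarith [h']

lemma aux_sin_ge (s : ℝ) (h0 : 0 ≤ s) (h1 : s ≤ Real.pi/2) :
    1 - Real.exp (-s) ≤ Real.sin s := by
  rcases le_or_gt s 1 with hs1 | hs1
  · rcases eq_or_lt_of_le h0 with rfl | hs0
    · simp
    · have hsin := Real.sin_gt_sub_cube hs0
      have hexp := aux_exp_neg_ge s h0 hs1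
      nlinarith [sq_nonneg s, sq_nonneg (s*(1-s))]
  · have hπu : Real.pi < 3.1416 := by linarith [Real.pi_lt_d6]
    have hπl : 3.1415 < Real.pi := by linarith [Real.pi_gt_d6]
    set t := Real.pi/2 - s with ht
    have ht0 : 0 ≤ t := by simp [ht]; linarith
    have ht1 : t < 0.5708 := by simp [ht]; linarith
    have hsin : Real.sin s = Real.cos t := (Real.cos_pi_div_two_sub s).symm
    have hcos : 1 - t^2/2 ≤ Real.cos t := Real.one_sub_sq_div_two_le_cos
    have h2 : Real.exp (-(Real.pi/2)) ≤ Real.exp (-s) := Real.exp_le_exp.mpr (by linarith)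
    have h3 : (1 - Real.pi/16 : ℝ)^8 ≤ Real.exp (-(Real.pi/2)) := by
      have he : Real.exp (-(Real.pi/2)) = Real.exp (-(Real.pi/16))^8 := by
        rw [← Real.exp_nat_mul]; norm_num; ring_nf
      rw [he]
      exact pow_le_pow_left₀ (by linarith) (by linarith [Real.add_one_le_exp (-(Real.pi/16))]) 8
    have h4 : (0.80365 : ℝ)^8 ≤ (1 - Real.pi/16)^8 :=
      pow_le_pow_left₀ (by norm_num) (by linarith) 8
    have h5 : t^2/2 ≤ (0.80365:ℝ)^8 := by nlinarith
    linarith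

lemma aux_le_of_sq (a b : ℝ) (ha : 0 ≤ a) (hb : 0 ≤ b) (h : a^2 ≤ b^2) : a ≤ b := by
  nlinarith

lemma aux_one_le (u v : ℝ) (hu : u ≤ 0) : 1 ≤ (u - 1)^2 + v^2 := by
  nlinarith [sq_nonneg u, sq_nonneg v]

lemma aux_sin_sq_le (u c s : ℝ) (hsc : s^2 + c^2 = 1) : s^2 ≤ (u*c - 1)^2 + (u*s)^2 := by
  nlinarith [sq_nonneg (u - c)]

set_option maxHeartbeats 1600000 in
theorem exp_sub_one_lower_bound (r : ℝ) (hr : 0 < r) (hr' : r ≤ Real.pi / Real.sqrt 2)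
    (z : ℂ) (hz : ∀ k : ℤ, r ≤ ‖z - 2 * (k : ℂ) * Real.pi * I‖) :
    1 - Real.exp (-r / Real.sqrt 2) ≤ ‖Complex.exp z - 1‖ := by
  have hsq2 : (0:ℝ) < Real.sqrt 2 := Real.sqrt_pos.mpr (by norm_num)
  set s := r / Real.sqrt 2 with hsdef
  have hns : -r / Real.sqrt 2 = -s := by rw [hsdef]; ring
  rw [hns]
  have hs0 : 0 < s := div_pos hr hsq2
  have h22 : Real.sqrt 2 * Real.sqrt 2 = 2 := Real.mul_self_sqrt (by norm_num)
  have hrs : s * Real.sqrt 2 = r := by rw [hsdef]; exact div_mul_cancel₀ r hsq2.ne'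
  have hs2 : s * s * 2 = r * r := by
    calc s * s * 2 = s * s * (Real.sqrt 2 * Real.sqrt 2) := by rw [h22]
      _ = (s * Real.sqrt 2) * (s * Real.sqrt 2) := by ring
      _ = r * r := by rw [hrs]
  have hπr : r * Real.sqrt 2 ≤ Real.pi := by
    have h := mul_le_mul_of_nonneg_right hr' hsq2.le
    rwa [div_mul_cancel₀ _ hsq2.ne'] at h
  have hsπ : s ≤ Real.pi/2 := by
    rw [hsdef, div_le_div_iff₀ hsq2 (by norm_num : (0:ℝ) < 2)]
    nlinarith [mul_le_mul_of_nonneg_right hπr hsq2.le, h22]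
  have hE : Real.exp (-s) < 1 := by
    rw [Real.exp_lt_one_iff]; linarith
  have hE0 : 0 ≤ 1 - Real.exp (-s) := by linarith
  set x := z.re with hx
  set y := z.im with hy
  set A := ‖Complex.exp z - 1‖ with hA
  have hA0 : 0 ≤ A := norm_nonneg _
  have hA2 : A^2 = (Real.exp x * Real.cos y - 1)^2 + (Real.exp x * Real.sin y)^2 := by
    rw [hA, Complex.sq_norm, Complex.normSq_apply]
    simp only [Complex.sub_re, Complex.sub_im, Complex.one_re, Complex.one_im,
      Complex.exp_re, Complex.exp_im]
    rw [hx, hy]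
    ring
  have hconc : (1 - Real.exp (-s))^2 ≤ A^2 → 1 - Real.exp (-s) ≤ A :=
    fun h => aux_le_of_sq _ _ hE0 hA0 h
  -- case split on x
  rcases le_or_gt s x with hxs | hxs
  · -- x ≥ s
    have h1 : Real.exp x - 1 ≤ A := by
      have := norm_sub_norm_le (Complex.exp z) 1
      simpa [hA, Complex.norm_exp] using this
    have h2 : Real.exp s ≤ Real.exp x := Real.exp_le_exp.mpr hxs
    have h3 : Real.exp s * Real.exp (-s) = 1 := by
      rw [← Real.exp_add]; simp
    nlinarith [Real.exp_pos s, Real.exp_pos (-s)]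
  rcases le_or_gt x (-s) with hxs' | hxs'
  · -- x ≤ -s
    have h1 : 1 - Real.exp x ≤ A := by
      have := norm_sub_norm_le (1:ℂ) (Complex.exp z)
      have h2 : A = ‖1 - Complex.exp z‖ := by
        rw [hA, ← norm_neg, neg_sub]
      rw [h2]
      simpa [Complex.norm_exp] using this
    have h2 : Real.exp x ≤ Real.exp (-s) := Real.exp_le_exp.mpr hxs'
    linarith
  · -- |x| < s
    obtain ⟨k, hk⟩ : ∃ k : ℤ, k = round (y / (2 * Real.pi)) := ⟨_, rfl⟩
    have h2π : (0:ℝ) < 2 * Real.pi := by positivity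
    have hrd := abs_sub_round (y / (2 * Real.pi))
    rw [← hk] at hrd
    have hyk : |y - 2 * Real.pi * k| ≤ Real.pi := by
      have heq : y - 2 * Real.pi * k = (y / (2 * Real.pi) - k) * (2 * Real.pi) := by
        field_simp
      rw [heq, abs_mul, abs_of_pos h2π]
      calc |y / (2 * Real.pi) - k| * (2 * Real.pi) ≤ (1/2) * (2 * Real.pi) := by
            apply mul_le_mul_of_nonneg_right hrd (le_of_lt h2π)
        _ = Real.pi := by ring
    set d := |y - 2 * Real.pi * k| with hd
    have hd0 : 0 ≤ d := abs_nonneg _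
    -- from hz k : r ≤ |z - 2kπi|
    have hzk := hz k
    have him : (z - 2 * (k : ℂ) * Real.pi * I).im = y - 2 * Real.pi * k := by
      simp [Complex.sub_im, Complex.mul_im, Complex.mul_re]
      ring
    have hre : (z - 2 * (k : ℂ) * Real.pi * I).re = x := by
      simp [Complex.sub_re, Complex.mul_re, Complex.mul_im]
      exact hx.symm
    have hr2 : r^2 ≤ x^2 + (y - 2 * Real.pi * k)^2 := by
      have := Complex.sq_norm (z - 2 * (k : ℂ) * Real.pi * I)
      rw [Complex.normSq_apply, hre, him] at this
      nlinarith [hzk, hr.le]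
    have hds : s ≤ d := by
      have hdsq : s^2 ≤ d^2 := by
        rw [hd, _root_.sq_abs]
        nlinarith
      nlinarith
    -- cos y = cos d, sin y ^ 2 = sin d ^ 2
    have hcosy : Real.cos y = Real.cos d := by
      rw [hd, Real.cos_abs]
      have : y - 2 * Real.pi * k = y - (k : ℝ) * (2 * Real.pi) := by ring
      rw [this, Real.cos_sub_int_mul_two_pi]
    have hsiny : Real.sin y ^ 2 = Real.sin d ^ 2 := by
      have hs' : Real.sin (y - 2 * Real.pi * k) = Real.sin y := by
        have : y - 2 * Real.pi * k = y - (k : ℝ) * (2 * Real.pi) := by ring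
        rw [this, Real.sin_sub_int_mul_two_pi]
      rcases abs_choice (y - 2 * Real.pi * k) with h | h
      · rw [hd, h, hs']
      · rw [hd, h, Real.sin_neg, hs']; ring
    apply hconc
    rcases le_or_gt (Real.cos d) 0 with hcd | hcd
    · -- cos d ≤ 0 : A² ≥ 1
      have hsc : Real.sin y ^ 2 + Real.cos y ^ 2 = 1 := Real.sin_sq_add_cos_sq y
      have hcd' : Real.cos y ≤ 0 := by rw [hcosy]; exact hcd
      have hu : Real.exp x * Real.cos y ≤ 0 :=
        mul_nonpos_of_nonneg_of_nonpos (Real.exp_pos x).le hcd'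
      have h1 : 1 ≤ A^2 := by
        rw [hA2]
        exact aux_one_le _ _ hu
      have h2 : (1 - Real.exp (-s))^2 ≤ 1 := pow_le_one₀ hE0 (by linarith [(Real.exp_pos (-s)).le])
      linarith
    · -- cos d > 0 : d < π/2, sin d ≥ sin s ≥ 1 - e^{-s}
      have hdlt : d < Real.pi/2 := by
        by_contra hcon
        push_neg at hcon
        exact absurd (Real.cos_nonpos_of_pi_div_two_le_of_le hcon (by linarith)) (by linarith)
      have hsind : Real.sin s ≤ Real.sin d := by
        apply Real.sin_le_sin_of_le_of_le_pi_div_two (by linarith) (le_of_lt hdlt) hds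
      have hkey := aux_sin_ge s (le_of_lt hs0) hsπ
      have hAs : Real.sin y ^ 2 ≤ A^2 := by
        rw [hA2]
        exact aux_sin_sq_le (Real.exp x) (Real.cos y) (Real.sin y) (Real.sin_sq_add_cos_sq y)
      rw [hsiny] at hAs
      have h6 : (1 - Real.exp (-s))^2 ≤ Real.sin d ^ 2 :=
        pow_le_pow_left₀ hE0 (le_trans hkey hsind) 2
      linarith
end

section
/- Let X ≥ 2 and let a be a real number with |a| < 1. Then Σ_{n,m ≤ X, n ≠ m} (nm)^a / |log(n/m)| ≤ (Σ_{n ≤ X} n^a)² − Σ_{n ≤ X} n^(2a) + 2·(Σ_{n ≤ X} n^(1+2a))·(Σ_{n ≤ X} 1/n). -/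
open Finset

noncomputable def auxG (a : ℝ) (n m : ℕ) : ℝ :=
  (if 0 ≤ a then (n : ℝ) ^ (1 + 2 * a) else (m : ℝ) ^ (1 + 2 * a)) / ((n : ℝ) - m)

noncomputable def auxH (a : ℝ) (n m : ℕ) : ℝ :=
  if m < n then auxG a n m else if n < m then auxG a m n else 0

lemma aux_ptwise (a : ℝ) {n m : ℕ} (hm : 1 ≤ m) (hmn : m < n) :
    ((n : ℝ) * m) ^ a / |Real.log ((n : ℝ) / m)| ≤
      (n : ℝ) ^ a * (m : ℝ) ^ a + auxG a n m := by
  simp only [auxG]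

  have hy : (1 : ℝ) ≤ (m : ℝ) := by exact_mod_cast hm
  have hxy : (m : ℝ) < (n : ℝ) := by exact_mod_cast hmn
  have hy0 : (0 : ℝ) < m := by linarith
  have hx0 : (0 : ℝ) < n := by linarith
  have hd : (0 : ℝ) < (n : ℝ) - m := by linarith
  have hquot : (1 : ℝ) < (n : ℝ) / m := (one_lt_div hy0).mpr hxy
  have hL0 : 0 < Real.log ((n : ℝ) / m) := Real.log_pos hquot
  have habs : |Real.log ((n : ℝ) / m)| = Real.log ((n : ℝ) / m) := abs_of_pos hL0
  -- log lower bound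
  have hlb : ((n : ℝ) - m) / n ≤ Real.log ((n : ℝ) / m) := by
    have h1 : Real.log ((m : ℝ) / n) ≤ (m : ℝ) / n - 1 :=
      Real.log_le_sub_one_of_pos (by positivity)
    have h2 : Real.log ((m : ℝ) / n) = - Real.log ((n : ℝ) / m) := by
      rw [Real.log_div (by positivity) (by positivity), Real.log_div (by positivity) (by positivity)]
      ring
    rw [h2] at h1
    have : 1 - (m : ℝ) / n ≤ Real.log ((n : ℝ) / m) := by linarith
    calc ((n : ℝ) - m) / n = 1 - (m : ℝ) / n := by field_simp
    _ ≤ _ := this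
  have hinv : 1 / Real.log ((n : ℝ) / m) ≤ (n : ℝ) / ((n : ℝ) - m) := by
    have h3 : 1 / Real.log ((n : ℝ) / m) ≤ 1 / (((n : ℝ) - m) / n) :=
      one_div_le_one_div_of_le (by positivity) hlb
    calc 1 / Real.log ((n : ℝ) / m) ≤ 1 / (((n : ℝ) - m) / n) := h3
    _ = (n : ℝ) / ((n : ℝ) - m) := by rw [one_div_div]
  have hmul : ((n : ℝ) * m) ^ a = (n : ℝ) ^ a * (m : ℝ) ^ a :=
    Real.mul_rpow hx0.le hy0.le
  have hprod_nonneg : (0 : ℝ) ≤ (n : ℝ) ^ a * (m : ℝ) ^ a := by positivity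
  have step1 : ((n : ℝ) * m) ^ a / |Real.log ((n : ℝ) / m)| ≤
      (n : ℝ) ^ a * (m : ℝ) ^ a * ((n : ℝ) / ((n : ℝ) - m)) := by
    rw [habs, hmul, div_eq_mul_one_div]
    exact mul_le_mul_of_nonneg_left hinv hprod_nonneg
  have step2 : (n : ℝ) ^ a * (m : ℝ) ^ a * ((n : ℝ) / ((n : ℝ) - m)) =
      (n : ℝ) ^ a * (m : ℝ) ^ a + ((n : ℝ) ^ a * (m : ℝ) ^ a * m) / ((n : ℝ) - m) := by
    field_simp
    ring
  have step3 : (n : ℝ) ^ a * (m : ℝ) ^ a * m ≤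
      (if 0 ≤ a then (n : ℝ) ^ (1 + 2 * a) else (m : ℝ) ^ (1 + 2 * a)) := by
    split_ifs with hsgn
    · have h1 : (m : ℝ) ^ a ≤ (n : ℝ) ^ a := Real.rpow_le_rpow hy0.le hxy.le hsgn
      have h2 : (n : ℝ) ^ a * (m : ℝ) ^ a * m ≤ (n : ℝ) ^ a * (n : ℝ) ^ a * n := by
        gcongr
      calc (n : ℝ) ^ a * (m : ℝ) ^ a * m ≤ (n : ℝ) ^ a * (n : ℝ) ^ a * n := h2
      _ = (n : ℝ) ^ (1 + 2 * a) := by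
          rw [show (1 : ℝ) + 2 * a = a + (a + 1) by ring, Real.rpow_add hx0,
            Real.rpow_add hx0, Real.rpow_one]
          ring
    · have h1 : (n : ℝ) ^ a ≤ (m : ℝ) ^ a :=
        Real.rpow_le_rpow_of_nonpos hy0 hxy.le (le_of_not_ge hsgn)
      have h2 : (n : ℝ) ^ a * (m : ℝ) ^ a * m ≤ (m : ℝ) ^ a * (m : ℝ) ^ a * m := by
        gcongr
      calc (n : ℝ) ^ a * (m : ℝ) ^ a * m ≤ (m : ℝ) ^ a * (m : ℝ) ^ a * m := h2
      _ = (m : ℝ) ^ (1 + 2 * a) := by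
          rw [show (1 : ℝ) + 2 * a = a + (a + 1) by ring, Real.rpow_add hy0,
            Real.rpow_add hy0, Real.rpow_one]
          ring
  calc ((n : ℝ) * m) ^ a / |Real.log ((n : ℝ) / m)| ≤
      (n : ℝ) ^ a * (m : ℝ) ^ a * ((n : ℝ) / ((n : ℝ) - m)) := step1
  _ = (n : ℝ) ^ a * (m : ℝ) ^ a + ((n : ℝ) ^ a * (m : ℝ) ^ a * m) / ((n : ℝ) - m) := step2
  _ ≤ _ := by gcongr


lemma aux_inner_lt (N n : ℕ) (hnN : n ≤ N) :
    ∑ m ∈ (Icc 1 N).filter (· < n), (1 : ℝ) / ((n : ℝ) - m) ≤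
      ∑ k ∈ Icc 1 N, 1 / (k : ℝ) := by
  have h1 : (Icc 1 N).filter (· < n) = Icc 1 (n - 1) := by
    ext m; simp only [mem_filter, mem_Icc]; omega
  have h2 : ∑ m ∈ Icc 1 (n - 1), (1 : ℝ) / ((n : ℝ) - m) =
      ∑ k ∈ Icc 1 (n - 1), 1 / (k : ℝ) := by
    refine Finset.sum_bij' (fun m _ => n - m) (fun k _ => n - k) ?_ ?_ ?_ ?_ ?_
    · intro a ha; simp only [mem_Icc] at ha ⊢; omega
    · intro a ha; simp only [mem_Icc] at ha ⊢; omega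
    · intro a ha; simp only [mem_Icc] at ha ⊢; omega
    · intro a ha; simp only [mem_Icc] at ha ⊢; omega
    · intro a ha
      simp only [mem_Icc] at ha
      rw [Nat.cast_sub (by omega)]
  rw [h1, h2]
  refine Finset.sum_le_sum_of_subset_of_nonneg (Icc_subset_Icc_right (by omega)) ?_
  intro k _ _; positivity

lemma aux_inner_gt (N m : ℕ) (hm1 : 1 ≤ m) :
    ∑ n ∈ (Icc 1 N).filter (fun n => m < n), (1 : ℝ) / ((n : ℝ) - m) ≤
      ∑ k ∈ Icc 1 N, 1 / (k : ℝ) := by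
  have h1 : (Icc 1 N).filter (fun n => m < n) = Icc (m + 1) N := by
    ext x; simp only [mem_filter, mem_Icc]; omega
  have h2 : ∑ n ∈ Icc (m + 1) N, (1 : ℝ) / ((n : ℝ) - m) =
      ∑ k ∈ Icc 1 (N - m), 1 / (k : ℝ) := by
    refine Finset.sum_bij' (fun n _ => n - m) (fun k _ => k + m) ?_ ?_ ?_ ?_ ?_
    · intro a ha; simp only [mem_Icc] at ha ⊢; omega
    · intro a ha; simp only [mem_Icc] at ha ⊢; omega
    · intro a ha; simp only [mem_Icc] at ha ⊢; omega
    · intro a ha; simp only [mem_Icc] at ha ⊢; omega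
    · intro a ha
      simp only [mem_Icc] at ha
      rw [Nat.cast_sub (by omega)]
  rw [h1, h2]
  refine Finset.sum_le_sum_of_subset_of_nonneg (Icc_subset_Icc_right (by omega)) ?_
  intro k _ _; positivity

theorem main_ineq (N : ℕ) (a : ℝ) :
    (∑ n ∈ Finset.Icc 1 N, ∑ m ∈ (Finset.Icc 1 N).erase n,
        ((n : ℝ) * m) ^ a / |Real.log ((n : ℝ) / m)|) ≤
      (∑ n ∈ Finset.Icc 1 N, (n : ℝ) ^ a) ^ 2
        - (∑ n ∈ Finset.Icc 1 N, (n : ℝ) ^ (2 * a))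
        + 2 * (∑ n ∈ Finset.Icc 1 N, (n : ℝ) ^ (1 + 2 * a))
            * (∑ n ∈ Finset.Icc 1 N, 1 / (n : ℝ)) := by
  set S := Finset.Icc 1 N with hS
  set H := ∑ k ∈ S, 1 / (k : ℝ) with hH
  have hH0 : 0 ≤ H := by positivity
  -- Step A : expand the square
  have expandA : (∑ n ∈ S, (n : ℝ) ^ a) ^ 2 - (∑ n ∈ S, (n : ℝ) ^ (2 * a)) =
      ∑ n ∈ S, ∑ m ∈ S.erase n, (n : ℝ) ^ a * (m : ℝ) ^ a := by
    rw [sq, Finset.sum_mul_sum]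
    rw [← Finset.sum_sub_distrib]
    refine Finset.sum_congr rfl ?_
    intro n hn
    have hn1 : 1 ≤ n := (Finset.mem_Icc.mp hn).1
    have hn0 : (0 : ℝ) < n := by exact_mod_cast hn1
    rw [← Finset.add_sum_erase _ _ hn]
    have : (n : ℝ) ^ a * (n : ℝ) ^ a = (n : ℝ) ^ (2 * a) := by
      rw [← Real.rpow_add hn0]; ring_nf
    rw [this]; ring
  -- Step B : pointwise bound
  have stepB : (∑ n ∈ S, ∑ m ∈ S.erase n, ((n : ℝ) * m) ^ a / |Real.log ((n : ℝ) / m)|) ≤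
      ∑ n ∈ S, ∑ m ∈ S.erase n, ((n : ℝ) ^ a * (m : ℝ) ^ a + auxH a n m) := by
    refine Finset.sum_le_sum ?_
    intro n hn
    refine Finset.sum_le_sum ?_
    intro m hm
    have hmne : m ≠ n := Finset.ne_of_mem_erase hm
    have hmS : m ∈ S := Finset.mem_of_mem_erase hm
    have hn1 : 1 ≤ n := (Finset.mem_Icc.mp hn).1
    have hm1 : 1 ≤ m := (Finset.mem_Icc.mp hmS).1
    rcases lt_or_gt_of_ne hmne with h | h
    · have := aux_ptwise a hm1 h
      have hH : auxH a n m = auxG a n m := by simp [auxH, h]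
      rw [hH]; exact this
    · have key := aux_ptwise a (n := m) (m := n) hn1 h
      have hH : auxH a n m = auxG a m n := by
        simp [auxH, h, not_lt.mpr h.le]
      have hn0 : ((n : ℝ)) ≠ 0 := by positivity
      have hm0 : ((m : ℝ)) ≠ 0 := by
        have : (0:ℝ) < m := by exact_mod_cast hm1
        positivity
      have e1 : ((n : ℝ) * m) ^ a = ((m : ℝ) * n) ^ a := by rw [mul_comm]
      have e2 : |Real.log ((n : ℝ) / m)| = |Real.log ((m : ℝ) / n)| := by
        rw [Real.log_div hn0 hm0, Real.log_div hm0 hn0, abs_sub_comm]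
      rw [e1, e2, hH]
      calc ((m : ℝ) * n) ^ a / |Real.log ((m : ℝ) / n)| ≤
          (m : ℝ) ^ a * (n : ℝ) ^ a + auxG a m n := key
      _ = (n : ℝ) ^ a * (m : ℝ) ^ a + auxG a m n := by ring
  -- Step C : bound the auxH double sum
  have hdiag : ∀ n : ℕ, auxH a n n = 0 := by intro n; simp [auxH]
  have eraseH : ∀ n ∈ S, ∑ m ∈ S.erase n, auxH a n m = ∑ m ∈ S, auxH a n m := by
    intro n hn
    exact Finset.sum_erase _ (hdiag n)
  have splitH : ∀ n ∈ S, ∑ m ∈ S, auxH a n m =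
      (∑ m ∈ S, if m < n then auxG a n m else 0) +
      (∑ m ∈ S, if n < m then auxG a m n else 0) := by
    intro n hn
    rw [← Finset.sum_add_distrib]
    refine Finset.sum_congr rfl ?_
    intro m hm
    rcases lt_trichotomy m n with h | h | h
    · simp [auxH, h, asymm h]
    · simp [auxH, h]
    · simp [auxH, h, asymm h, lt_irrefl]
  have sumT2 : (∑ n ∈ S, ∑ m ∈ S, if n < m then auxG a m n else 0) =
      (∑ n ∈ S, ∑ m ∈ S, if m < n then auxG a n m else 0) := by
    rw [Finset.sum_comm]
  have T1bound : (∑ n ∈ S, ∑ m ∈ S, if m < n then auxG a n m else 0) ≤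
      (∑ n ∈ S, (n : ℝ) ^ (1 + 2 * a)) * H := by
    by_cases hsgn : 0 ≤ a
    · have hptw : ∀ n ∈ S, (∑ m ∈ S, if m < n then auxG a n m else 0) ≤
          (n : ℝ) ^ (1 + 2 * a) * H := by
        intro n hn
        have hnN : n ≤ N := (Finset.mem_Icc.mp hn).2
        have e1 : (∑ m ∈ S, if m < n then auxG a n m else 0) =
            ∑ m ∈ S.filter (· < n), (n : ℝ) ^ (1 + 2 * a) * (1 / ((n : ℝ) - m)) := by
          rw [Finset.sum_filter]
          refine Finset.sum_congr rfl fun m _ => ?_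
          by_cases h : m < n
          · rw [if_pos h, if_pos h]
            simp only [auxG, if_pos hsgn]
            rw [div_eq_mul_one_div]
          · rw [if_neg h, if_neg h]
        rw [e1, ← Finset.mul_sum]
        exact mul_le_mul_of_nonneg_left (aux_inner_lt N n hnN) (by positivity)
      calc (∑ n ∈ S, ∑ m ∈ S, if m < n then auxG a n m else 0) ≤
          ∑ n ∈ S, (n : ℝ) ^ (1 + 2 * a) * H := Finset.sum_le_sum hptw
      _ = (∑ n ∈ S, (n : ℝ) ^ (1 + 2 * a)) * H := by rw [Finset.sum_mul]
    · rw [Finset.sum_comm]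
      have hptw : ∀ m ∈ S, (∑ n ∈ S, if m < n then auxG a n m else 0) ≤
          (m : ℝ) ^ (1 + 2 * a) * H := by
        intro m hm
        have hm1 : 1 ≤ m := (Finset.mem_Icc.mp hm).1
        have e1 : (∑ n ∈ S, if m < n then auxG a n m else 0) =
            ∑ n ∈ S.filter (fun n => m < n), (m : ℝ) ^ (1 + 2 * a) * (1 / ((n : ℝ) - m)) := by
          rw [Finset.sum_filter]
          refine Finset.sum_congr rfl fun n _ => ?_
          by_cases h : m < n
          · rw [if_pos h, if_pos h]
            simp only [auxG, if_neg hsgn]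
            rw [div_eq_mul_one_div]
          · rw [if_neg h, if_neg h]
        rw [e1, ← Finset.mul_sum]
        exact mul_le_mul_of_nonneg_left (aux_inner_gt N m hm1) (by positivity)
      calc (∑ m ∈ S, ∑ n ∈ S, if m < n then auxG a n m else 0) ≤
          ∑ m ∈ S, (m : ℝ) ^ (1 + 2 * a) * H := Finset.sum_le_sum hptw
      _ = (∑ n ∈ S, (n : ℝ) ^ (1 + 2 * a)) * H := by rw [Finset.sum_mul]
  -- assemble
  calc (∑ n ∈ S, ∑ m ∈ S.erase n, ((n : ℝ) * m) ^ a / |Real.log ((n : ℝ) / m)|) ≤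
      ∑ n ∈ S, ∑ m ∈ S.erase n, ((n : ℝ) ^ a * (m : ℝ) ^ a + auxH a n m) := stepB
  _ = (∑ n ∈ S, ∑ m ∈ S.erase n, (n : ℝ) ^ a * (m : ℝ) ^ a) +
      ∑ n ∈ S, ∑ m ∈ S, auxH a n m := by
      rw [← Finset.sum_add_distrib]
      refine Finset.sum_congr rfl fun n hn => ?_
      rw [Finset.sum_add_distrib, eraseH n hn]
  _ = (∑ n ∈ S, ∑ m ∈ S.erase n, (n : ℝ) ^ a * (m : ℝ) ^ a) +
      ((∑ n ∈ S, ∑ m ∈ S, if m < n then auxG a n m else 0) +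
       (∑ n ∈ S, ∑ m ∈ S, if n < m then auxG a m n else 0)) := by
      congr 1
      rw [Finset.sum_congr rfl splitH]
      exact Finset.sum_add_distrib
  _ = (∑ n ∈ S, ∑ m ∈ S.erase n, (n : ℝ) ^ a * (m : ℝ) ^ a) +
      2 * (∑ n ∈ S, ∑ m ∈ S, if m < n then auxG a n m else 0) := by
      rw [sumT2]; ring
  _ ≤ (∑ n ∈ S, ∑ m ∈ S.erase n, (n : ℝ) ^ a * (m : ℝ) ^ a) +
      2 * ((∑ n ∈ S, (n : ℝ) ^ (1 + 2 * a)) * H) := by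
      have : (0:ℝ) ≤ 2 := by norm_num
      nlinarith [T1bound]
  _ = (∑ n ∈ S, (n : ℝ) ^ a) ^ 2 - (∑ n ∈ S, (n : ℝ) ^ (2 * a)) +
      2 * (∑ n ∈ S, (n : ℝ) ^ (1 + 2 * a)) * H := by rw [← expandA]; ring

theorem double_sum_log_bound (X a : ℝ) (hX : 2 ≤ X) (ha : |a| < 1) :
    (∑ n ∈ Finset.Icc 1 ⌊X⌋₊, ∑ m ∈ (Finset.Icc 1 ⌊X⌋₊).erase n,
        ((n : ℝ) * m) ^ a / |Real.log ((n : ℝ) / m)|) ≤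
      (∑ n ∈ Finset.Icc 1 ⌊X⌋₊, (n : ℝ) ^ a) ^ 2
        - (∑ n ∈ Finset.Icc 1 ⌊X⌋₊, (n : ℝ) ^ (2 * a))
        + 2 * (∑ n ∈ Finset.Icc 1 ⌊X⌋₊, (n : ℝ) ^ (1 + 2 * a))
            * (∑ n ∈ Finset.Icc 1 ⌊X⌋₊, 1 / (n : ℝ)) :=
  main_ineq ⌊X⌋₊ a
end

section
/- Let σ ≥ 1/2, let ξ ∈ (0, T₁], and suppose 2 ≤ T₁ and T₁ + √T₁ ≤ T₂. Then for either choice of sign, |∫_{T₁}^{T₂} t^(1/2 − σ)·(t/(eξ))^(±it) dt| ≤ 8·T₁^(1/2 − σ) / log((T₁ + √T₁)/ξ). -/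
open Complex

open Complex intervalIntegral

namespace OscAux

noncomputable def E (ξ ε t : ℝ) : ℂ :=
  Complex.exp (I * ε * t * Real.log (t / (Real.exp 1 * ξ)))

lemma norm_E (ξ ε t : ℝ) : ‖E ξ ε t‖ = 1 := by
  have h : (I * (ε:ℂ) * (t:ℂ) * ((Real.log (t / (Real.exp 1 * ξ)) : ℝ) : ℂ)) =
      ((ε * t * Real.log (t / (Real.exp 1 * ξ)) : ℝ) : ℂ) * I := by push_cast; ring
  rw [E, h, Complex.norm_exp_ofReal_mul_I]

lemma continuousOn_E (ξ ε : ℝ) (hξ : 0 < ξ) :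
    ContinuousOn (E ξ ε) {t : ℝ | 0 < t} := by
  apply Complex.continuous_exp.comp_continuousOn
  apply ContinuousOn.mul
  · exact (Continuous.mul continuous_const Complex.continuous_ofReal).continuousOn
  · refine Complex.continuous_ofReal.comp_continuousOn ?_
    refine ContinuousOn.log ((continuousOn_id).div_const _) ?_
    intro x hx
    have : (0:ℝ) < Real.exp 1 * ξ := by positivity
    exact div_ne_zero (ne_of_gt hx) (ne_of_gt this)

lemma hasDerivAt_phi (ξ : ℝ) (hξ : 0 < ξ) {t : ℝ} (ht : 0 < t) :
    HasDerivAt (fun s : ℝ => s * Real.log (s / (Real.exp 1 * ξ))) (Real.log (t / ξ)) t := by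
  have hC : (0:ℝ) < Real.exp 1 * ξ := by positivity
  have h1 : HasDerivAt (fun s : ℝ => s * (Real.log s - Real.log (Real.exp 1 * ξ)))
      (1 * (Real.log t - Real.log (Real.exp 1 * ξ)) + t * t⁻¹) t :=
    (hasDerivAt_id t).mul ((Real.hasDerivAt_log ht.ne').sub_const _)
  have h0 : (fun s : ℝ => s * Real.log (s / (Real.exp 1 * ξ))) =ᶠ[nhds t]
      (fun s : ℝ => s * (Real.log s - Real.log (Real.exp 1 * ξ))) := by
    filter_upwards [eventually_gt_nhds ht] with s hs
    rw [Real.log_div hs.ne' hC.ne']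
  have h2 := h1.congr_of_eventuallyEq h0
  refine h2.congr_deriv ?_
  rw [Real.log_div ht.ne' hξ.ne', Real.log_mul (Real.exp_pos 1).ne' hξ.ne', Real.log_exp, mul_inv_cancel₀ ht.ne']
  ring

lemma hasDerivAt_E (ξ : ℝ) (hξ : 0 < ξ) (ε : ℝ) {t : ℝ} (ht : 0 < t) :
    HasDerivAt (E ξ ε) (I * ε * Real.log (t / ξ) * E ξ ε t) t := by
  have h1 : HasDerivAt (fun s : ℝ => ((s * Real.log (s / (Real.exp 1 * ξ)) : ℝ) : ℂ))
      ((Real.log (t / ξ) : ℝ) : ℂ) t := (hasDerivAt_phi ξ hξ ht).ofReal_comp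
  have h2 := (h1.const_mul (I * (ε:ℂ))).cexp
  have hfun : E ξ ε = fun s : ℝ => Complex.exp (I * (ε:ℂ) * ((s * Real.log (s / (Real.exp 1 * ξ)) : ℝ) : ℂ)) := by
    funext s; unfold E; push_cast; ring_nf
  rw [hfun]
  convert h2 using 1
  push_cast; ring

noncomputable def h (r ξ t : ℝ) : ℝ := t ^ r / Real.log (t / ξ)

noncomputable def h' (r ξ t : ℝ) : ℝ :=
  (r * t ^ (r - 1) * Real.log (t / ξ) - t ^ r * t⁻¹) / (Real.log (t / ξ)) ^ 2

lemma log_pos_of (ξ : ℝ) (hξ : 0 < ξ) {t : ℝ} (ht : ξ < t) : 0 < Real.log (t / ξ) :=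
  Real.log_pos ((one_lt_div hξ).mpr ht)

lemma hasDerivAt_h (r ξ : ℝ) (hξ : 0 < ξ) {t : ℝ} (ht : ξ < t) :
    HasDerivAt (h r ξ) (h' r ξ t) t := by
  have ht0 : 0 < t := hξ.trans ht
  have hlog := log_pos_of ξ hξ ht
  have hL : HasDerivAt (fun s : ℝ => Real.log (s / ξ)) t⁻¹ t := by
    have h0 : (fun s : ℝ => Real.log (s / ξ)) =ᶠ[nhds t]
        (fun s : ℝ => Real.log s - Real.log ξ) := by
      filter_upwards [eventually_gt_nhds ht0] with s hs
      rw [Real.log_div hs.ne' hξ.ne']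
    exact ((Real.hasDerivAt_log ht0.ne').sub_const _).congr_of_eventuallyEq h0
  have hp : HasDerivAt (fun s : ℝ => s ^ r) (r * t ^ (r - 1)) t :=
    Real.hasDerivAt_rpow_const (Or.inl ht0.ne')
  exact hp.div hL hlog.ne'

lemma h'_nonpos (r ξ : ℝ) (hr : r ≤ 0) (hξ : 0 < ξ) {t : ℝ} (ht : ξ < t) :
    h' r ξ t ≤ 0 := by
  have ht0 : 0 < t := hξ.trans ht
  have hlog := log_pos_of ξ hξ ht
  apply div_nonpos_of_nonpos_of_nonneg
  · have h1 : r * t ^ (r - 1) * Real.log (t / ξ) ≤ 0 := by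
      apply mul_nonpos_of_nonpos_of_nonneg _ hlog.le
      exact mul_nonpos_of_nonpos_of_nonneg hr (Real.rpow_nonneg ht0.le _)
    have h2 : 0 < t ^ r * t⁻¹ := by positivity
    linarith
  · positivity

lemma h_pos (r ξ : ℝ) (hξ : 0 < ξ) {t : ℝ} (ht : ξ < t) : 0 < h r ξ t := by
  have ht0 : 0 < t := hξ.trans ht
  have hlog := log_pos_of ξ hξ ht
  unfold h; positivity

lemma continuousOn_h' (r ξ : ℝ) (hξ : 0 < ξ) :
    ContinuousOn (h' r ξ) {t : ℝ | ξ < t} := by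
  have hid : ContinuousOn (fun t : ℝ => t) {t : ℝ | ξ < t} := continuousOn_id
  have hlog : ContinuousOn (fun t : ℝ => Real.log (t / ξ)) {t : ℝ | ξ < t} := by
    refine ContinuousOn.log (hid.div_const _) ?_
    intro x hx; exact (div_pos (hξ.trans hx) hξ).ne'
  have hlogne : ∀ x ∈ {t : ℝ | ξ < t}, Real.log (x / ξ) ≠ 0 :=
    fun x hx => (log_pos_of ξ hξ hx).ne'
  have hne : ∀ x ∈ {t : ℝ | ξ < t}, (x:ℝ) ≠ 0 ∨ (0:ℝ) ≤ r - 1 :=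
    fun x hx => Or.inl (hξ.trans hx).ne'
  have hne' : ∀ x ∈ {t : ℝ | ξ < t}, (x:ℝ) ≠ 0 ∨ (0:ℝ) ≤ r :=
    fun x hx => Or.inl (hξ.trans hx).ne'
  unfold h'
  refine ContinuousOn.div ?_ (hlog.pow 2) ?_
  · exact (((hid.rpow_const hne).const_smul r).mul hlog).sub
      ((hid.rpow_const hne').mul (hid.inv₀ fun x hx => (hξ.trans hx).ne'))
  · intro x hx
    exact pow_ne_zero 2 (hlogne x hx)

lemma continuousOn_h (r ξ : ℝ) (hξ : 0 < ξ) :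
    ContinuousOn (h r ξ) {t : ℝ | ξ < t} := by
  have hid : ContinuousOn (fun t : ℝ => t) {t : ℝ | ξ < t} := continuousOn_id
  have hlog : ContinuousOn (fun t : ℝ => Real.log (t / ξ)) {t : ℝ | ξ < t} := by
    refine ContinuousOn.log (hid.div_const _) ?_
    intro x hx; exact (div_pos (hξ.trans hx) hξ).ne'
  exact (hid.rpow_const fun x hx => Or.inl (hξ.trans hx).ne').div hlog
    fun x hx => (log_pos_of ξ hξ hx).ne'

lemma f_integrable (r ξ ε a b : ℝ) (hξ : 0 < ξ) (ha : 0 < a) (hb : 0 < b) :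
    IntervalIntegrable (fun t : ℝ => ((t ^ r : ℝ) : ℂ) * E ξ ε t) MeasureTheory.volume a b := by
  apply ContinuousOn.intervalIntegrable
  have hsub : Set.uIcc a b ⊆ {t : ℝ | 0 < t} := by
    intro x hx
    have := hx.1
    simp only [Set.mem_setOf_eq]
    calc (0:ℝ) < min a b := lt_min ha hb
    _ ≤ x := hx.1
  refine ContinuousOn.mul ?_ ((continuousOn_E ξ ε hξ).mono hsub)
  refine Complex.continuous_ofReal.comp_continuousOn ?_
  exact (continuousOn_id.rpow_const fun x hx => Or.inl (hsub hx).ne').mono (fun x hx => hx)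

lemma norm_f (r ξ ε t : ℝ) : ‖((t ^ r : ℝ) : ℂ) * E ξ ε t‖ = |t ^ r| := by
  rw [norm_mul, norm_E, Complex.norm_real, mul_one, Real.norm_eq_abs]

lemma ibp (r ξ ε α β : ℝ) (hr : r ≤ 0) (hξ : 0 < ξ) (hα : ξ < α) (hβ : α ≤ β)
    (hε : ε = 1 ∨ ε = -1) :
    ‖∫ t in α..β, ((t ^ r : ℝ) : ℂ) * E ξ ε t‖ ≤ 2 * α ^ r / Real.log (α / ξ) := by
  have hα0 : 0 < α := hξ.trans hα
  have hIε : (I * (ε:ℂ)) ≠ 0 := by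
    rcases hε with h | h <;> simp [h, Complex.ext_iff]
  have hnIε : ‖(I * (ε:ℂ))‖ = 1 := by
    rcases hε with h | h <;> simp [h]
  have huIcc : Set.uIcc α β = Set.Icc α β := Set.uIcc_of_le hβ
  have hmem : ∀ t ∈ Set.uIcc α β, ξ < t := by
    intro t htm; rw [huIcc] at htm; exact hα.trans_le htm.1
  set F : ℝ → ℂ := fun t => (h r ξ t : ℂ) * E ξ ε t / (I * ε) with hF_def
  set G : ℝ → ℂ := fun t => (h' r ξ t : ℂ) * E ξ ε t / (I * ε) with hG_def
  set f : ℝ → ℂ := fun t => ((t ^ r : ℝ) : ℂ) * E ξ ε t with hf_def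
  have hderiv : ∀ t ∈ Set.uIcc α β, HasDerivAt F (f t + G t) t := by
    intro t htm
    have ht : ξ < t := hmem t htm
    have ht0 : 0 < t := hξ.trans ht
    have hlog := log_pos_of ξ hξ ht
    have h1 := ((hasDerivAt_h r ξ hξ ht).ofReal_comp.mul (hasDerivAt_E ξ hξ ε ht0)).div_const (I * (ε:ℂ))
    refine h1.congr_deriv ?_
    have hhL : (h r ξ t : ℂ) * ((Real.log (t / ξ) : ℝ) : ℂ) = ((t ^ r : ℝ) : ℂ) := by
      rw [← Complex.ofReal_mul]
      congr 1
      unfold h; field_simp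
    simp only [hf_def, hG_def]
    field_simp
    ring_nf
    rw [← hhL, div_eq_mul_inv t ξ]
    have hε0 : (ε:ℂ) ≠ 0 := by rcases hε with h | h <;> simp [h]
    linear_combination (E ξ ε t * ↑(h r ξ t) * I * ↑(Real.log (t * ξ⁻¹))) * (mul_inv_cancel₀ hε0)
  have hcont_f : IntervalIntegrable f MeasureTheory.volume α β :=
    f_integrable r ξ ε α β hξ hα0 (hα0.trans_le hβ)
  have hsub : Set.uIcc α β ⊆ {t : ℝ | ξ < t} := fun t htm => hmem t htm
  have hcont_G : IntervalIntegrable G MeasureTheory.volume α β := by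
    apply ContinuousOn.intervalIntegrable
    refine ContinuousOn.div_const ?_ _
    refine ContinuousOn.mul ?_ ((continuousOn_E ξ ε hξ).mono ?_)
    · exact Complex.continuous_ofReal.comp_continuousOn ((continuousOn_h' r ξ hξ).mono hsub)
    · exact fun t htm => hξ.trans (hmem t htm)
  have hFTC := intervalIntegral.integral_eq_sub_of_hasDerivAt hderiv (hcont_f.add hcont_G)
  rw [intervalIntegral.integral_add hcont_f hcont_G] at hFTC
  have hintf : ∫ t in α..β, f t = F β - F α - ∫ t in α..β, G t := by
    rw [← hFTC]; ring
  have hnormF : ∀ t, ξ < t → ‖F t‖ = h r ξ t := by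
    intro t ht
    rw [hF_def]
    simp only [norm_div, norm_mul, norm_E, Complex.norm_real, Real.norm_eq_abs, hnIε,
      mul_one, div_one]
    exact abs_of_pos (h_pos r ξ hξ ht)
  have hαm : ξ < α := hα
  have hβm : ξ < β := hα.trans_le hβ
  -- bound ∫ G
  have hnormG : ∀ t ∈ Set.uIcc α β, ‖G t‖ = -(h' r ξ t) := by
    intro t htm
    have ht := hmem t htm
    rw [hG_def]
    simp only [norm_div, norm_mul, norm_E, Complex.norm_real, Real.norm_eq_abs, hnIε,
      mul_one, div_one]
    exact abs_of_nonpos (h'_nonpos r ξ hr hξ ht)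
  have hInt_h' : IntervalIntegrable (fun t => -(h' r ξ t)) MeasureTheory.volume α β := by
    apply ContinuousOn.intervalIntegrable
    exact ((continuousOn_h' r ξ hξ).mono hsub).neg
  have hFTC2 : ∫ t in α..β, -(h' r ξ t) = h r ξ α - h r ξ β := by
    have hd : ∀ t ∈ Set.uIcc α β, HasDerivAt (fun s => -(h r ξ s)) (-(h' r ξ t)) t :=
      fun t htm => (hasDerivAt_h r ξ hξ (hmem t htm)).neg
    have := intervalIntegral.integral_eq_sub_of_hasDerivAt hd hInt_h'
    rw [this]; ring
  have hGbound : ‖∫ t in α..β, G t‖ ≤ h r ξ α - h r ξ β := by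
    calc ‖∫ t in α..β, G t‖ ≤ ∫ t in α..β, ‖G t‖ :=
          intervalIntegral.norm_integral_le_integral_norm hβ
      _ = ∫ t in α..β, -(h' r ξ t) := by
          apply intervalIntegral.integral_congr
          intro t htm; exact hnormG t htm
      _ = h r ξ α - h r ξ β := hFTC2
  have hfinal : ‖∫ t in α..β, f t‖ ≤ 2 * h r ξ α := by
    rw [hintf]
    calc ‖F β - F α - ∫ t in α..β, G t‖ ≤ ‖F β - F α‖ + ‖∫ t in α..β, G t‖ :=
          norm_sub_le _ _
      _ ≤ ‖F β‖ + ‖F α‖ + (h r ξ α - h r ξ β) := by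
          have := norm_sub_le (F β) (F α)
          linarith [hGbound]
      _ = 2 * h r ξ α := by rw [hnormF α hαm, hnormF β hβm]; ring
  calc ‖∫ t in α..β, f t‖ ≤ 2 * h r ξ α := hfinal
    _ = 2 * α ^ r / Real.log (α / ξ) := by unfold h; ring

end OscAux

theorem oscillatory_integral_bound_two (σ ξ T₁ T₂ : ℝ) (hσ : 1/2 ≤ σ)
    (hξ : 0 < ξ) (hξT : ξ ≤ T₁) (hT₁ : 2 ≤ T₁) (hT : T₁ + Real.sqrt T₁ ≤ T₂)
    (ε : ℝ) (hε : ε = 1 ∨ ε = -1) :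
    ‖(∫ t in T₁..T₂, ((t ^ ((1:ℝ)/2 - σ) : ℝ) : ℂ)
        * Complex.exp (I * ε * t * Real.log (t / (Real.exp 1 * ξ))))‖ ≤
      8 * T₁ ^ ((1:ℝ)/2 - σ) / Real.log ((T₁ + Real.sqrt T₁) / ξ) := by
  set r : ℝ := (1:ℝ)/2 - σ with hr_def
  have hr : r ≤ 0 := by rw [hr_def]; linarith
  have hT₁0 : (0:ℝ) < T₁ := by linarith
  set s : ℝ := Real.sqrt T₁ with hs_def
  have hs : 0 < s := Real.sqrt_pos.mpr hT₁0
  have hs2 : s * s = T₁ := Real.mul_self_sqrt hT₁0.le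
  set c : ℝ := T₁ + s with hc_def
  have hξc : ξ < c := by rw [hc_def]; linarith
  have hc0 : 0 < c := hξ.trans hξc
  have hT₂0 : 0 < T₂ := lt_of_lt_of_le (by linarith : (0:ℝ) < c) hT
  set L : ℝ := Real.log (c / ξ) with hL_def
  have hL : 0 < L := OscAux.log_pos_of ξ hξ hξc
  set R : ℝ := T₁ ^ r with hR_def
  have hR : 0 < R := Real.rpow_pos_of_pos hT₁0 r
  have hgoal_eq : (∫ t in T₁..T₂, ((t ^ r : ℝ) : ℂ)
        * Complex.exp (I * ε * t * Real.log (t / (Real.exp 1 * ξ)))) =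
      ∫ t in T₁..T₂, ((t ^ r : ℝ) : ℂ) * OscAux.E ξ ε t := rfl
  rw [hgoal_eq]
  by_cases hcase : L / 2 ≤ Real.log (T₁ / ξ)
  · -- single IBP on the whole interval
    have hξT₁ : ξ < T₁ := by
      rcases lt_or_eq_of_le hξT with h | h
      · exact h
      · exfalso
        rw [h] at hcase
        rw [div_self hT₁0.ne'] at hcase
        simp only [Real.log_one] at hcase
        linarith
    have hb := OscAux.ibp r ξ ε T₁ T₂ hr hξ hξT₁ (by linarith [hs.le] : T₁ ≤ T₂) hε
    have hlogT : 0 < Real.log (T₁ / ξ) := OscAux.log_pos_of ξ hξ hξT₁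
    calc ‖∫ t in T₁..T₂, ((t ^ r : ℝ) : ℂ) * OscAux.E ξ ε t‖
        ≤ 2 * T₁ ^ r / Real.log (T₁ / ξ) := hb
      _ ≤ 2 * R / (L / 2) := by
          apply div_le_div_of_nonneg_left (by positivity) (by linarith) hcase
      _ = 4 * R / L := by field_simp; ring
      _ ≤ 8 * R / L := by
          apply div_le_div_of_nonneg_right (by linarith) hL.le -- may need name fix
  · push_neg at hcase
    have hsplitL : L = Real.log (T₁ / ξ) + Real.log (c / T₁) := by
      rw [hL_def, Real.log_div hc0.ne' hξ.ne', Real.log_div hT₁0.ne' hξ.ne',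
        Real.log_div hc0.ne' hT₁0.ne']
      ring
    have hlogc : Real.log (c / T₁) ≤ s / T₁ := by
      have h1 : Real.log (c / T₁) ≤ c / T₁ - 1 :=
        Real.log_le_sub_one_of_pos (div_pos hc0 hT₁0)
      have h2 : c / T₁ - 1 = s / T₁ := by rw [hc_def]; field_simp; ring
      linarith
    have hsL : s * L ≤ 2 := by
      have h1 : L / 2 < s / T₁ := by linarith
      have h1' : L * T₁ < s * 2 := by rwa [div_lt_div_iff₀ (by norm_num) hT₁0] at h1
      have h3 : s * (L * T₁) < s * (s * 2) := mul_lt_mul_of_pos_left h1' hs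
      nlinarith [h3, hs2, hT₁0]
    have hint1 := OscAux.f_integrable r ξ ε T₁ c hξ hT₁0 hc0
    have hint2 := OscAux.f_integrable r ξ ε c T₂ hξ hc0 hT₂0
    rw [← intervalIntegral.integral_add_adjacent_intervals hint1 hint2]
    have hb1 : ‖∫ t in T₁..c, ((t ^ r : ℝ) : ℂ) * OscAux.E ξ ε t‖ ≤ R * s := by
      have hbound : ∀ t ∈ Set.Ioc T₁ c, ‖((t ^ r : ℝ) : ℂ) * OscAux.E ξ ε t‖ ≤ R := by
        intro t htm
        rw [OscAux.norm_f]
        have ht0 : 0 < t := hT₁0.trans htm.1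
        rw [abs_of_pos (Real.rpow_pos_of_pos ht0 r), hR_def]
        exact Real.rpow_le_rpow_of_nonpos hT₁0 htm.1.le hr
      have hle : T₁ ≤ c := by rw [hc_def]; linarith
      have := intervalIntegral.norm_integral_le_of_norm_le_const
        (C := R) (by rw [Set.uIoc_of_le hle]; exact hbound)
      calc ‖∫ t in T₁..c, ((t ^ r : ℝ) : ℂ) * OscAux.E ξ ε t‖ ≤ R * |c - T₁| := this
        _ = R * s := by rw [hc_def]; rw [_root_.abs_of_nonneg (by linarith : (0:ℝ) ≤ c - T₁)]; ring_nf; rw [hc_def]; ring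
    have hb2 : ‖∫ t in c..T₂, ((t ^ r : ℝ) : ℂ) * OscAux.E ξ ε t‖ ≤ 2 * R / L := by
      have hb := OscAux.ibp r ξ ε c T₂ hr hξ hξc hT hε
      calc ‖∫ t in c..T₂, ((t ^ r : ℝ) : ℂ) * OscAux.E ξ ε t‖
          ≤ 2 * c ^ r / L := hb
        _ ≤ 2 * R / L := by
            apply div_le_div_of_nonneg_right _ hL.le -- name?
            have : c ^ r ≤ T₁ ^ r :=
              Real.rpow_le_rpow_of_nonpos hT₁0 (by rw [hc_def]; linarith) hr
            rw [hR_def]; linarith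
    have hb1' : R * s ≤ 2 * R / L := by
      rw [le_div_iff₀ hL]
      calc R * s * L = R * (s * L) := by ring
        _ ≤ R * 2 := by apply mul_le_mul_of_nonneg_left hsL hR.le
        _ = 2 * R := by ring
    calc ‖(∫ t in T₁..c, ((t ^ r : ℝ) : ℂ) * OscAux.E ξ ε t)
          + ∫ t in c..T₂, ((t ^ r : ℝ) : ℂ) * OscAux.E ξ ε t‖
        ≤ ‖∫ t in T₁..c, ((t ^ r : ℝ) : ℂ) * OscAux.E ξ ε t‖
          + ‖∫ t in c..T₂, ((t ^ r : ℝ) : ℂ) * OscAux.E ξ ε t‖ := norm_add_le _ _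
      _ ≤ 2 * R / L + 2 * R / L := by
          have := hb1.trans hb1'
          linarith
      _ ≤ 8 * R / L := by
          rw [← add_div]
          apply div_le_div_of_nonneg_right (by linarith) hL.le
          -- name?
end
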